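/- arXiv:2204.01149 — 2 statements merged into one kernel-verified Lean document; each statement's English description precedes it below -/
import Mathlib

section
/- Let p satisfy the hard-sphere assumptions and suppose p is twice continuously differentiable on (0, ρ̄). Fix α₀ ∈ (0, ρ̄/2) and α₀ ≤ r ≤ ρ̄ − α₀. Then there exist α₁ ∈ (0, α₀) and c > 0 such that: p(ρ) − p(r) − p'(r)(ρ − r) ≤ c(ρ − r)² for ρ ∈ (α₁, ρ̄ − α₁); p(ρ) − p(r) − p'(r)(ρ − r) ≤ 1 + p'(r)r − p(r) for ρ ∈ [0, α₁]; and p(ρ) − p(r) − p'(r)(ρ − r) ≤ 2p(ρ) for ρ ∈ [ρ̄ − α₁, ρ̄). -/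
open Set Filter Topology

noncomputable section

theorem pressure_upper_bounds
    (ρbar : ℝ) (hρbar : 0 < ρbar)
    (p : ℝ → ℝ)
    (hp1 : ContDiffOn ℝ 1 p (Set.Ico 0 ρbar))
    (hp2 : ContDiffOn ℝ 2 p (Set.Ioo 0 ρbar))
    (hp0 : p 0 = 0)
    (hp' : ∀ s ∈ Set.Ioo (0 : ℝ) ρbar, 0 < deriv p s)
    (hptop : Tendsto p (nhdsWithin ρbar (Set.Iio ρbar)) atTop)
    (α₀ : ℝ) (hα₀ : α₀ ∈ Set.Ioo (0 : ℝ) (ρbar / 2))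
    (r : ℝ) (hr : r ∈ Set.Icc α₀ (ρbar - α₀)) :
    ∃ α₁ ∈ Set.Ioo (0 : ℝ) α₀, ∃ c > (0 : ℝ),
      (∀ ρ ∈ Set.Ioo α₁ (ρbar - α₁),
        p ρ - p r - deriv p r * (ρ - r) ≤ c * (ρ - r) ^ 2) ∧
      (∀ ρ ∈ Set.Icc (0 : ℝ) α₁,
        p ρ - p r - deriv p r * (ρ - r) ≤ 1 + deriv p r * r - p r) ∧
      (∀ ρ ∈ Set.Ico (ρbar - α₁) ρbar,
        p ρ - p r - deriv p r * (ρ - r) ≤ 2 * p ρ) := by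
  obtain ⟨hα₀0, hα₀2⟩ := hα₀
  obtain ⟨hrl, hru⟩ := hr
  have hr0 : 0 < r := lt_of_lt_of_le hα₀0 hrl
  have hrρ : r < ρbar := lt_of_le_of_lt hru (by linarith)
  -- continuity near 0
  have hc0 : ContinuousWithinAt p (Set.Ico 0 ρbar) 0 :=
    hp1.continuousOn.continuousWithinAt (by constructor <;> simp [hρbar, le_refl])
  obtain ⟨δ₂, hδ₂0, hδ₂⟩ := Metric.continuousWithinAt_iff.mp hc0 1 one_pos
  -- blow up near ρbar
  set M : ℝ := |p r| + |deriv p r| * ρbar + 1 with hM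
  have hev : ∀ᶠ x in nhdsWithin ρbar (Set.Iio ρbar), M ≤ p x :=
    hptop.eventually (eventually_ge_atTop M)
  obtain ⟨a, ha, haM⟩ := mem_nhdsLT_iff_exists_Ioo_subset.mp hev
  have haρ : a < ρbar := ha
  -- choose α₁
  set α₁ : ℝ := min (min (α₀ / 2) (δ₂ / 2)) ((ρbar - a) / 2) with hα₁def
  have hα₁0 : 0 < α₁ := by
    apply lt_min (lt_min (by linarith) (by linarith)) (by linarith)
  have hα₁α₀ : α₁ < α₀ := lt_of_le_of_lt (le_trans (min_le_left _ _) (min_le_left _ _)) (by linarith)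
  have hα₁δ₂ : α₁ < δ₂ := lt_of_le_of_lt (le_trans (min_le_left _ _) (min_le_right _ _)) (by linarith)
  have hα₁a : α₁ < ρbar - a := lt_of_le_of_lt (min_le_right _ _) (by linarith)
  have hα₁ρ : α₁ < ρbar / 2 := by
    have h : α₁ ≤ α₀ / 2 := le_trans (min_le_left _ ((ρbar - a)/2)) (min_le_left (α₀ / 2) (δ₂ / 2))
    linarith
  -- the compact set K
  have hKsub : Set.Icc α₁ (ρbar - α₁) ⊆ Set.Ioo 0 ρbar := by
    intro x hx
    exact ⟨lt_of_lt_of_le hα₁0 hx.1, lt_of_le_of_lt hx.2 (by linarith)⟩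
  have hrK : r ∈ Set.Icc α₁ (ρbar - α₁) := ⟨by linarith, by linarith⟩
  -- p is differentiable on Ioo with derivative deriv p
  have hpdiff : ∀ x ∈ Set.Ioo 0 ρbar, HasDerivAt p (deriv p x) x := by
    intro x hx
    exact (((hp2.differentiableOn (by norm_num)).differentiableAt
      (isOpen_Ioo.mem_nhds hx))).hasDerivAt
  -- deriv p is C¹ on Ioo
  have hq : ContDiffOn ℝ 1 (deriv p) (Set.Ioo 0 ρbar) := by
    have := hp2.deriv_of_isOpen isOpen_Ioo (m := 1) (by norm_num)
    exact this
  have hqdiff : ∀ x ∈ Set.Ioo 0 ρbar, HasDerivAt (deriv p) (deriv (deriv p) x) x := by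
    intro x hx
    exact (((hq.differentiableOn one_ne_zero).differentiableAt (isOpen_Ioo.mem_nhds hx))).hasDerivAt
  have hq2cont : ContinuousOn (deriv (deriv p)) (Set.Ioo 0 ρbar) :=
    hq.continuousOn_deriv_of_isOpen isOpen_Ioo le_rfl
  -- bound on second derivative on K
  obtain ⟨L, hL⟩ := (isCompact_Icc (a := α₁) (b := ρbar - α₁)).exists_bound_of_continuousOn
    (hq2cont.mono hKsub)
  have hL0 : 0 ≤ L := le_trans (norm_nonneg _) (hL r hrK)
  refine ⟨α₁, ⟨hα₁0, hα₁α₀⟩, L + 1, by linarith, ?_, ?_, ?_⟩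
  · -- main quadratic bound
    intro ρ hρ
    have hρK : ρ ∈ Set.Icc α₁ (ρbar - α₁) := ⟨le_of_lt hρ.1, le_of_lt hρ.2⟩
    have hsub : Set.uIcc r ρ ⊆ Set.Icc α₁ (ρbar - α₁) := Set.uIcc_subset_Icc hrK hρK
    have hsubI : Set.uIcc r ρ ⊆ Set.Ioo 0 ρbar := hsub.trans hKsub
    have habs : ∀ x ∈ Set.uIcc r ρ, |x - r| ≤ |ρ - r| := by
      intro x hx
      rw [Set.uIcc, Set.mem_Icc] at hx
      rcases le_total r ρ with h | h
      · rw [min_eq_left h, max_eq_right h] at hx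
        rw [abs_of_nonneg (by linarith [hx.1]), abs_of_nonneg (by linarith)]
        linarith [hx.2]
      · rw [min_eq_right h, max_eq_left h] at hx
        rw [abs_of_nonpos (by linarith [hx.2]), abs_of_nonpos (by linarith)]
        linarith [hx.1]
    -- first MVT: |deriv p x - deriv p r| ≤ L * |ρ - r| on uIcc
    have hmvt1 : ∀ x ∈ Set.uIcc r ρ, ‖deriv p x - deriv p r‖ ≤ L * |ρ - r| := by
      intro x hx
      have := Convex.norm_image_sub_le_of_norm_hasDerivWithin_le
        (f := deriv p) (f' := deriv (deriv p)) (s := Set.uIcc r ρ)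
        (fun y hy => (hqdiff y (hsubI hy)).hasDerivWithinAt)
        (fun y hy => hL y (hsub hy)) (convex_uIcc _ _)
        (Set.left_mem_uIcc) hx
      calc ‖deriv p x - deriv p r‖ ≤ L * ‖x - r‖ := this
        _ ≤ L * |ρ - r| := by
            rw [Real.norm_eq_abs]
            exact mul_le_mul_of_nonneg_left (habs x hx) hL0
    -- second MVT applied to g
    set g : ℝ → ℝ := fun x => p x - p r - deriv p r * (x - r) with hg
    have hgderiv : ∀ x ∈ Set.uIcc r ρ,
        HasDerivWithinAt g (deriv p x - deriv p r) (Set.uIcc r ρ) x := by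
      intro x hx
      have h1 : HasDerivAt (fun x : ℝ => deriv p r * (x - r)) (deriv p r) x := by
        simpa using (((hasDerivAt_id x).sub_const r).const_mul (deriv p r))
      exact (((hpdiff x (hsubI hx)).sub_const (p r)).sub h1).hasDerivWithinAt
    have hmvt2 := Convex.norm_image_sub_le_of_norm_hasDerivWithin_le
      (f := g) (f' := fun x => deriv p x - deriv p r) (s := Set.uIcc r ρ)
      hgderiv hmvt1 (convex_uIcc _ _) Set.left_mem_uIcc Set.right_mem_uIcc
    have hgr : g r = 0 := by simp [hg]
    rw [hgr, sub_zero, Real.norm_eq_abs, Real.norm_eq_abs] at hmvt2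
    have : g ρ ≤ L * (ρ - r) ^ 2 := by
      calc g ρ ≤ |g ρ| := le_abs_self _
        _ ≤ L * |ρ - r| * |ρ - r| := hmvt2
        _ = L * (ρ - r) ^ 2 := by rw [mul_assoc, ← abs_mul, ← sq, abs_sq]
    have h2 : (0:ℝ) ≤ (ρ - r) ^ 2 := sq_nonneg _
    simp only [hg] at this
    nlinarith
  · -- bound near 0
    intro ρ hρ
    have hρρbar : ρ < ρbar := lt_of_le_of_lt hρ.2 (by linarith)
    have hmem : ρ ∈ Set.Ico 0 ρbar := ⟨hρ.1, hρρbar⟩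
    have hd : dist ρ 0 < δ₂ := by
      rw [Real.dist_eq, sub_zero, abs_of_nonneg hρ.1]
      exact lt_of_le_of_lt hρ.2 hα₁δ₂
    have := hδ₂ hmem hd
    rw [hp0, Real.dist_eq, sub_zero] at this
    have hpρ : p ρ ≤ 1 := le_of_lt (lt_of_le_of_lt (le_abs_self _) this)
    have hdr : 0 < deriv p r := hp' r ⟨hr0, hrρ⟩
    nlinarith [hρ.1]
  · -- bound near ρbar
    intro ρ hρ
    have hρa : ρ ∈ Set.Ioo a ρbar := ⟨by linarith [hρ.1], hρ.2⟩
    have hMρ : M ≤ p ρ := haM hρa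
    have hρ0 : 0 ≤ ρ := by linarith [hρ.1, hα₁ρ]
    have habs : |deriv p r * (ρ - r)| ≤ |deriv p r| * ρbar := by
      rw [abs_mul]
      refine mul_le_mul_of_nonneg_left ?_ (abs_nonneg _)
      rw [abs_le]
      constructor <;> nlinarith [hρ.2]
    have h1 := le_abs_self (p r)
    have h2 := neg_abs_le (deriv p r * (ρ - r))
    have h3 := neg_abs_le (p r)
    nlinarith
end
end

section
/- Let Ω ⊂ ℝᵈ be a bounded measurable set and ρ : Ω → [0, ρ̄) measurable with mean m = |Ω|^{-1}∫_Ω ρ satisfying m < ρ̄. Let p : [0, ρ̄) → [0, ∞) be continuous and nondecreasing. Then (1/|Ω|)∫_Ω p(ρ)(ρ − m) dx ≥ ((ρ̄ − m)/(2|Ω|)) ∫_{{ρ > (ρ̄+m)/2}} p(ρ) dx − p((ρ̄+m)/2)·(ρ̄ − m)/2, and consequently (1/|Ω|)∫_Ω p(ρ) dx ≤ p((ρ̄+m)/2) + (2/(ρ̄ − m))·[ (1/|Ω|)|∫_Ω p(ρ)(ρ − m) dx| + p((ρ̄+m)/2)(ρ̄−m)/2 ]. -/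
open Set MeasureTheory

noncomputable section

theorem mean_pressure_bound
    (d : ℕ) (ρbar : ℝ) (hρbar : 0 < ρbar)
    (Ω : Set (Fin d → ℝ)) (hΩmeas : MeasurableSet Ω)
    (hΩbdd : Bornology.IsBounded Ω) (hΩpos : 0 < (volume Ω).toReal)
    (ρ : (Fin d → ℝ) → ℝ) (hρmeas : Measurable ρ)
    (hρrange : ∀ x ∈ Ω, 0 ≤ ρ x ∧ ρ x < ρbar)
    (m : ℝ) (hm : m = (1 / (volume Ω).toReal) * ∫ x in Ω, ρ x)
    (hmlt : m < ρbar)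
    (p : ℝ → ℝ) (hpcont : ContinuousOn p (Set.Ico 0 ρbar))
    (hpmono : MonotoneOn p (Set.Ico 0 ρbar))
    (hpnonneg : ∀ s ∈ Set.Ico (0 : ℝ) ρbar, 0 ≤ p s)
    (hint : IntegrableOn (fun x => p (ρ x)) Ω volume)
    (hint' : IntegrableOn (fun x => p (ρ x) * (ρ x - m)) Ω volume) :
    ((ρbar - m) / (2 * (volume Ω).toReal)) *
        (∫ x in {x ∈ Ω | (ρbar + m) / 2 < ρ x}, p (ρ x)) -
        p ((ρbar + m) / 2) * (ρbar - m) / 2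
      ≤ (1 / (volume Ω).toReal) * ∫ x in Ω, p (ρ x) * (ρ x - m) ∧
    (1 / (volume Ω).toReal) * (∫ x in Ω, p (ρ x))
      ≤ p ((ρbar + m) / 2) +
        (2 / (ρbar - m)) *
          ((1 / (volume Ω).toReal) * |∫ x in Ω, p (ρ x) * (ρ x - m)| +
            p ((ρbar + m) / 2) * (ρbar - m) / 2) := by
  set V : ℝ := (volume Ω).toReal with hV
  have hVpos : 0 < V := hΩpos
  have hVne : V ≠ 0 := hVpos.ne'
  have hΩfin : volume Ω ≠ ⊤ := hΩbdd.measure_lt_top.ne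
  set c : ℝ := (ρbar + m) / 2 with hcdef
  set δ : ℝ := (ρbar - m) / 2 with hδdef
  have hδpos : 0 < δ := by rw [hδdef]; linarith
  -- ρ is integrable on Ω
  have hρint : IntegrableOn ρ Ω volume := by
    apply Measure.integrableOn_of_bounded hΩfin hρmeas.aestronglyMeasurable (M := ρbar)
    filter_upwards [ae_restrict_mem hΩmeas] with x hx
    rw [Real.norm_eq_abs, abs_le]
    exact ⟨by linarith [(hρrange x hx).1], (hρrange x hx).2.le⟩
  -- m is nonnegative
  have hmnn : 0 ≤ m := by
    rw [hm]
    apply mul_nonneg (by positivity)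
    exact setIntegral_nonneg hΩmeas fun x hx => (hρrange x hx).1
  have hcmem : c ∈ Set.Ico (0:ℝ) ρbar := ⟨by rw [hcdef]; linarith, by rw [hcdef]; linarith⟩
  have hpcnn : 0 ≤ p c := hpnonneg c hcmem
  -- the high-density set
  set A : Set (Fin d → ℝ) := {x ∈ Ω | c < ρ x} with hAdef
  have hAsub : A ⊆ Ω := fun x hx => hx.1
  have hA : MeasurableSet A := hΩmeas.inter (measurableSet_lt measurable_const hρmeas)
  set I : ℝ := ∫ x in Ω, p (ρ x) * (ρ x - m) with hI
  set J : ℝ := ∫ x in A, p (ρ x) with hJ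
  have hJnn : 0 ≤ J :=
    setIntegral_nonneg hA fun x hx => hpnonneg _ ⟨(hρrange x (hAsub hx)).1, (hρrange x (hAsub hx)).2⟩
  -- mean-zero identity
  have hmean : ∫ x in Ω, (ρ x - m) = 0 := by
    have hconst : IntegrableOn (fun _ => m) Ω volume :=
      integrableOn_const hΩfin
    rw [integral_sub hρint hconst, setIntegral_const, smul_eq_mul]
    have : ∫ x in Ω, ρ x = m * V := by
      rw [hm]; field_simp
    rw [this, measureReal_def, ← hV]; ring
  -- integrability of the comparison function
  have hind : IntegrableOn (fun x => A.indicator (fun y => p (ρ y)) x) Ω volume :=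
    hint.indicator hA
  have hlin : IntegrableOn (fun x => p c * (ρ x - m)) Ω volume := by
    exact ((hρint.sub (integrableOn_const hΩfin)).const_mul _)
  have hcomp : IntegrableOn
      (fun x => δ * A.indicator (fun y => p (ρ y)) x + p c * (ρ x - m) - p c * δ) Ω volume := by
    exact ((hind.const_mul δ).add hlin).sub (integrableOn_const hΩfin)
  -- key pointwise inequality, integrated
  have hkey : ∫ x in Ω, (δ * A.indicator (fun y => p (ρ y)) x + p c * (ρ x - m) - p c * δ)
      ≤ I := by
    apply setIntegral_mono_on hcomp hint' hΩmeas
    intro x hx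
    obtain ⟨hx0, hx1⟩ := hρrange x hx
    have hxmem : ρ x ∈ Set.Ico (0:ℝ) ρbar := ⟨hx0, hx1⟩
    have hcm : c - m = δ := by rw [hcdef, hδdef]; ring
    by_cases hxc : c < ρ x
    · have hxA : x ∈ A := ⟨hx, hxc⟩
      rw [Set.indicator_of_mem hxA]
      have hple : p c ≤ p (ρ x) := hpmono hcmem hxmem hxc.le
      nlinarith [mul_nonneg (sub_nonneg.2 hple) (by linarith : (0:ℝ) ≤ ρ x - m - δ)]
    · have hxA : x ∉ A := fun h => hxc h.2
      rw [Set.indicator_of_notMem hxA]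
      push_neg at hxc
      have hple : p (ρ x) ≤ p c := hpmono hxmem hcmem hxc
      have hpnn : 0 ≤ p (ρ x) := hpnonneg _ hxmem
      nlinarith [mul_nonneg (sub_nonneg.2 hple) (by linarith : (0:ℝ) ≤ δ - (ρ x - m)),
        mul_nonneg hpnn hδpos.le]
  -- compute the left-hand integral
  have hi0 : IntegrableOn (fun x => δ * A.indicator (fun y => p (ρ y)) x) Ω volume :=
    hind.const_mul δ
  have hi1 : IntegrableOn (fun x => δ * A.indicator (fun y => p (ρ y)) x + p c * (ρ x - m))
      Ω volume := hi0.add hlin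
  have hcalc : ∫ x in Ω, (δ * A.indicator (fun y => p (ρ y)) x + p c * (ρ x - m) - p c * δ)
      = δ * J - p c * δ * V := by
    rw [integral_sub hi1 (integrableOn_const hΩfin),
      integral_add hi0 hlin, integral_const_mul, integral_const_mul,
      setIntegral_const, smul_eq_mul, measureReal_def, ← hV, setIntegral_indicator hA, hmean]
    have : Ω ∩ A = A := Set.inter_eq_self_of_subset_right hAsub
    rw [this, ← hJ]
    ring
  have hmain : δ * J - p c * δ * V ≤ I := by rw [← hcalc]; exact hkey
  constructor
  · have heq : ((ρbar - m) / (2 * V)) * J - p c * (ρbar - m) / 2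
        = (δ * J - p c * δ * V) / V := by
      rw [hδdef]; field_simp
    rw [heq, hI, one_div, inv_mul_eq_div]
    exact div_le_div_of_nonneg_right hmain hVpos.le
  · -- bound the full integral of p(ρ)
    set K : ℝ := ∫ x in Ω, p (ρ x) with hK
    have hKle : K ≤ J + p c * V := by
      have hi2 : IntegrableOn (fun x => A.indicator (fun y => p (ρ y)) x + p c) Ω volume :=
        hind.add (integrableOn_const hΩfin)
      have hmono2 : K ≤ ∫ x in Ω, (A.indicator (fun y => p (ρ y)) x + p c) := by
        apply setIntegral_mono_on hint hi2 hΩmeas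
        intro x hx
        obtain ⟨hx0, hx1⟩ := hρrange x hx
        show p (ρ x) ≤ A.indicator (fun y => p (ρ y)) x + p c
        by_cases hxc : c < ρ x
        · have hxA : x ∈ A := ⟨hx, hxc⟩
          rw [Set.indicator_of_mem hxA]
          linarith
        · have hxA : x ∉ A := fun h => hxc h.2
          rw [Set.indicator_of_notMem hxA]
          push_neg at hxc
          simpa using hpmono ⟨hx0, hx1⟩ hcmem hxc
      have hcalc2 : ∫ x in Ω, (A.indicator (fun y => p (ρ y)) x + p c) = J + p c * V := by
        rw [integral_add hind (integrableOn_const hΩfin),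
          setIntegral_indicator hA, Set.inter_eq_self_of_subset_right hAsub,
          setIntegral_const, smul_eq_mul, measureReal_def, ← hV, ← hJ]
        ring
      rw [← hcalc2]; exact hmono2
    have hIabs : I ≤ |I| := le_abs_self I
    have hJbound : δ * J ≤ |I| + p c * δ * V := by linarith
    have hKbound : δ * K ≤ |I| + 2 * (p c * δ * V) := by nlinarith
    have heq2 : p c + (2 / (ρbar - m)) * ((1 / V) * |I| + p c * (ρbar - m) / 2)
        = (|I| + 2 * (p c * δ * V)) / (δ * V) := by
      have h2δ : ρbar - m = 2 * δ := by rw [hδdef]; ring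
      rw [h2δ]; field_simp; ring
    have heq3 : (1 / V) * K = (δ * K) / (δ * V) := by
      field_simp
    rw [heq2, heq3]
    exact div_le_div_of_nonneg_right hKbound (by positivity)

end
end
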